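/- arXiv:2601.00667 — 2 statements merged into one kernel-verified Lean document; each statement's English description precedes it below -/
import Mathlib

section
/- Let h be a multisegment and n a nonempty multisegment admissible to h, and let a be the smallest integer with n[a] ≠ ∅. Then for every segment Δ̄ in n[a+1], |{Δ ∈ n[a] : Δ̄ ⊆ Δ}| ≤ |{Δ ∈ fs(n,h) : Δ̄ ⊆ Δ}|, where cardinalities are counted with multiplicity. -/
noncomputable section
open Classical

/-- A segment `[a,b]`: a pair of integers with `a ≤ b`, identified with the
integer interval `{a, a+1, …, b}`. -/
def Seg : Type := {p : ℤ × ℤ // p.1 ≤ p.2}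

/-- Constructor for segments. -/
def Seg.mk (a b : ℤ) (hab : a ≤ b) : Seg := Subtype.mk (a, b) hab

instance : DecidableEq Seg := inferInstanceAs (DecidableEq {p : ℤ × ℤ // p.1 ≤ p.2})

instance : Inhabited Seg := ⟨Seg.mk 0 0 le_rfl⟩

/-- The lexicographic ordering `≼ᴸ` on segments: `[a,b] ≤ [a',b']` iff `a < a'`,
or `a = a'` and `b ≤ b'`. -/
instance : LinearOrder Seg :=
  LinearOrder.lift' (fun Δ => toLex (Subtype.val Δ))
    (fun _ _ hh => Subtype.ext (toLex.injective hh))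

/-- `a(Δ)`, the left endpoint. -/
def segA (Δ : Seg) : ℤ := (Subtype.val Δ).1

/-- `b(Δ)`, the right endpoint. -/
def segB (Δ : Seg) : ℤ := (Subtype.val Δ).2

/-- `[a,b]` as a multiset of segments: a singleton if `a ≤ b`, empty otherwise
("empty segments are discarded"). -/
def mkSeg? (a b : ℤ) : Multiset Seg := if h : a ≤ b then {Seg.mk a b h} else 0

/-- `⁻Δ = [a+1,b]`, as a multiset (the empty segment being discarded). -/
def negSeg (Δ : Seg) : Multiset Seg := mkSeg? (segA Δ + 1) (segB Δ)

/-- `⁻m` for a multisegment `m`. -/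
def negM (m : Multiset Seg) : Multiset Seg := m.bind negSeg

/-- `m[c]`: the submultiset of segments of `m` starting at `c`. -/
def atc (m : Multiset Seg) (c : ℤ) : Multiset Seg := m.filter (fun Δ => segA Δ = c)

/-- `Δ ⊆ Δ'` as intervals. -/
def Subseg (Δ Δ' : Seg) : Prop := segA Δ' ≤ segA Δ ∧ segB Δ ≤ segB Δ'

/-- Two segments are linked: their union is an interval and neither contains
the other. -/
def Linked (Δ Δ' : Seg) : Prop :=
  segA Δ ≤ segB Δ' + 1 ∧ segA Δ' ≤ segB Δ + 1 ∧ ¬ Subseg Δ Δ' ∧ ¬ Subseg Δ' Δ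

/-- `Δ = [a,b]` is admissible to `h`: `h` contains a segment `[a,c]` with `c ≥ b`. -/
def SegAdmissible (Δ : Seg) (h : Multiset Seg) : Prop :=
  ∃ D ∈ h, segA D = segA Δ ∧ segB Δ ≤ segB D

/-- The tail of the removal sequence: recursively pick the `≺ᴸ`-minimal segment
`[aᵢ,bᵢ]` of `h` with `a_{i-1} < aᵢ` and `b ≤ bᵢ < b_{i-1}`. -/
def removalTail (h : Multiset Seg) (b : ℤ) : ℕ → ℤ → ℤ → List Seg
  | 0, _, _ => []
  | fuel + 1, aprev, bprev =>
    if hx : ∃ D, (D ∈ h ∧ aprev < segA D ∧ b ≤ segB D ∧ segB D < bprev) ∧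
        ∀ D', (D' ∈ h ∧ aprev < segA D' ∧ b ≤ segB D' ∧ segB D' < bprev) → D ≤ D' then
      Classical.choose hx ::
        removalTail h b fuel (segA (Classical.choose hx)) (segB (Classical.choose hx))
    else []

/-- The removal sequence for `(Δ, h)`: `Δ₁` is a shortest segment `[a,c]` of `h`
with `c ≥ b`, followed by the recursively chosen segments. (Empty if `Δ` is not
admissible to `h`.) -/
def removalSeq (Δ : Seg) (h : Multiset Seg) : List Seg :=
  if hx : ∃ D, (D ∈ h ∧ segA D = segA Δ ∧ segB Δ ≤ segB D) ∧
      ∀ D', (D' ∈ h ∧ segA D' = segA Δ ∧ segB Δ ≤ segB D') → segB D ≤ segB D' then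
    Classical.choose hx ::
      removalTail h (segB Δ) (segB (Classical.choose hx) - segB Δ).toNat
        (segA (Classical.choose hx)) (segB (Classical.choose hx))
  else []

/-- `Υ(Δ,h)`: the first segment of the removal sequence for `(Δ,h)`. -/
def Upsilon (Δ : Seg) (h : Multiset Seg) : Seg := (removalSeq Δ h).headD default

/-- The truncations `Δ₁ᵗʳ, …, Δᵣᵗʳ` of a removal sequence:
`Δᵢᵗʳ = [a_{i+1}, bᵢ]` for `i < r` and `Δᵣᵗʳ = [b+1, bᵣ]` (possibly empty). -/
def truncList (b : ℤ) : List Seg → Multiset Seg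
  | [] => 0
  | [D] => mkSeg? (b + 1) (segB D)
  | D :: D' :: rest => mkSeg? (segA D') (segB D) + truncList b (D' :: rest)

/-- `r(Δ,h) = h − Δ₁ − … − Δᵣ + Δ₁ᵗʳ + … + Δᵣᵗʳ`, with `none` playing the role
of the infinity multisegment `∞`. -/
def segRemove (Δ : Seg) (h : Multiset Seg) : Option (Multiset Seg) :=
  if SegAdmissible Δ h then
    some (h - (removalSeq Δ h : Multiset Seg) + truncList (segB Δ) (removalSeq Δ h))
  else none

/-- Iterated removal along a list of segments (also `r(Δ,∞) = ∞`). -/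
def rList : List Seg → Option (Multiset Seg) → Option (Multiset Seg)
  | [], o => o
  | Δ :: rest, o => rList rest (o.bind (fun x => segRemove Δ x))

/-- `r(m,h)` for a multisegment `m`: apply the removals along the segments of
`m` listed in an ascending (here: `≺ᴸ`-sorted) order. -/
def rM (m h : Multiset Seg) : Option (Multiset Seg) :=
  rList (m.sort (· ≤ ·)) (some h)

/-- The smallest integer `a` with `n[a] ≠ ∅` (junk value `0` for `n = ∅`). -/
def minStart (n : Multiset Seg) : ℤ := ((n.map segA).sort (· ≤ ·)).headD 0

/-- `Υ(Δ₁,r₀), Υ(Δ₂,r₁), …` computed sequentially along a list of segments. -/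
def fsList : List Seg → Multiset Seg → Multiset Seg
  | [], _ => 0
  | Δ :: rest, h =>
    Upsilon Δ h ::ₘ
      (match segRemove Δ h with
        | some h' => fsList rest h'
        | none => 0)

/-- `fs(n,h)`: with `a` the smallest integer such that `n[a] ≠ ∅` and
`n[a] = {Δ₁, …, Δₖ}`, this is `{Υ(Δ₁,r₀), …, Υ(Δₖ,r_{k-1})}` if `n[a]` is
admissible to `h`, and `∅` otherwise (also `fs(∅,h) = ∅`). -/
def fs (n h : Multiset Seg) : Multiset Seg :=
  if n = 0 then 0
  else if rM (atc n (minStart n)) h ≠ none then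
    fsList ((atc n (minStart n)).sort (· ≤ ·)) h
  else 0

/-- `trr(n,h) = h − fs(n,h) + ⁻(fs(n,h))`. -/
def trr (n h : Multiset Seg) : Multiset Seg := h - fs n h + negM (fs n h)

/-- `trd(n,h) = n − n[a] + ⁻(n[a])` where `a` is the smallest integer with
`n[a] ≠ ∅` (and `trd(∅,h) = ∅`). -/
def trd (n h : Multiset Seg) : Multiset Seg :=
  if n = 0 then 0 else n - atc n (minStart n) + negM (atc n (minStart n))

/-- The pairs `(nᵢ, hᵢ)` of the fine chain: `n₀ = n`, `h₀ = h`,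
`nᵢ = trd(n_{i-1}, h_{i-1})`, `hᵢ = trr(n_{i-1}, h_{i-1})`. -/
def fcPair (n h : Multiset Seg) : ℕ → Multiset Seg × Multiset Seg
  | 0 => (n, h)
  | i + 1 => (trd (fcPair n h i).1 (fcPair n h i).2, trr (fcPair n h i).1 (fcPair n h i).2)

/-- The fine chain `fc_h(n)`: the sequence `fs(n₀,h₀), fs(n₁,h₁), …`. -/
def fc (h n : Multiset Seg) (i : ℕ) : Multiset Seg := fs (fcPair n h i).1 (fcPair n h i).2

/-- `n` is obtained from `m` by an elementary intersection-union operation: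
`n = m − Δ − Δ' + (Δ ∪ Δ') + (Δ ∩ Δ')` for a pair of linked segments `Δ, Δ'`
of `m` (intersection omitted if empty). -/
def elemIU (m n : Multiset Seg) : Prop :=
  ∃ Δ Δ', Δ ∈ m ∧ Δ' ∈ m.erase Δ ∧ Linked Δ Δ' ∧
    n = (m.erase Δ).erase Δ'
        + mkSeg? (min (segA Δ) (segA Δ')) (max (segB Δ) (segB Δ'))
        + mkSeg? (max (segA Δ) (segA Δ')) (min (segB Δ) (segB Δ'))

/-- The Zelevinsky ordering: `n ≤_Z m` iff `n = m` or `n` is obtained from `m`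
by a finite sequence of elementary intersection-union operations. -/
def leZ (n m : Multiset Seg) : Prop := Relation.ReflTransGen elemIU m n

/-- The cuspidal support of a multisegment: the multiset union of its segments,
as a multiset of integers. -/
def csupp (m : Multiset Seg) : Multiset ℤ :=
  m.bind (fun Δ => (Finset.Icc (segA Δ) (segB Δ)).val)

/-- The `b`-values of a multisegment, sorted in descending order. -/
def bDesc (m : Multiset Seg) : List ℤ := ((m.map segB).sort (· ≤ ·)).reverse

/-- `m₁ ≤ᵃ_c m₂` for multisegments at a point `c`: with segments labelled
`Δ_{1,k} ≤ᵃ_c … ≤ᵃ_c Δ_{1,1}` and `Δ_{2,r} ≤ᵃ_c … ≤ᵃ_c Δ_{2,1}`, require `k ≤ r`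
and `Δ_{1,i} ≤ᵃ_c Δ_{2,i}` for all `i ≤ k`. -/
def leA (m₁ m₂ : Multiset Seg) : Prop :=
  (bDesc m₁).length ≤ (bDesc m₂).length ∧
    ∀ i < (bDesc m₁).length, (bDesc m₁).getD i 0 ≤ (bDesc m₂).getD i 0

/-- `m₁ <ᵃ_c m₂`. -/
def ltA (m₁ m₂ : Multiset Seg) : Prop := leA m₁ m₂ ∧ m₁ ≠ m₂

/-- The fine chain ordering `n <^{fc} n'` (with respect to `h`). -/
def ltFC (h n n' : Multiset Seg) : Prop :=
  ∃ i, (∀ j < i, fc h n j = fc h n' j) ∧ ltA (fc h n i) (fc h n' i)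

/-- `n ≤^{fc} n'`: either `n <^{fc} n'` or the two fine chains are equal. -/
def leFC (h n n' : Multiset Seg) : Prop := ltFC h n n' ∨ ∀ i, fc h n i = fc h n' i

/-- Local minimizability of `(n,h)`: with `a` the smallest integer such that
`n[a] ≠ ∅`, there is a segment `Δ̄` in `n[a+1]` with
`|{Δ ∈ n[a] : Δ̄ ⊆ Δ}| < |{Δ ∈ fs(n,h) : Δ̄ ⊆ Δ}|`. -/
def locallyMin (n h : Multiset Seg) : Prop :=
  ∃ Δb ∈ atc n (minStart n + 1),
    ((atc n (minStart n)).filter (fun Δ => Subseg Δb Δ)).card <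
      ((fs n h).filter (fun Δ => Subseg Δb Δ)).card

/-- The shortest segment of the removal sequence for `(Δ,h)` whose interval
contains `x` (by the nesting property, the last such one in the sequence). -/
def shortestCont (Δ : Seg) (h : Multiset Seg) (x : ℤ) : Seg :=
  (((removalSeq Δ h).filter (fun D => decide (segA D ≤ x ∧ x ≤ segB D))).getLast?).getD default

/-- The non-overlapping property for `(Δ, Δ', h)`: for the shortest segment `Δ̄`
in the removal sequence for `(Δ,h)` containing `a(Δ') − 1`, one has `Δ' ⊄ Δ̄`. -/
def NonOverlap (Δ Δ' : Seg) (h : Multiset Seg) : Prop :=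
  ¬ Subseg Δ' (shortestCont Δ h (segA Δ' - 1))

/-- `ε_Δ(h) = |{Δ̃ ∈ h[a(Δ)] : Δ ⊆ Δ̃}|`, counted with multiplicity. -/
def epsilonSeg (Δ : Seg) (h : Multiset Seg) : ℕ :=
  ((atc h (segA Δ)).filter (fun D => Subseg Δ D)).card

/-- `η_{Δ'}(h) = η_{Δ'}(h')`: componentwise equality of
`(ε_{[a',b']}, ε_{[a'+1,b']}, …, ε_{[b',b']})`. -/
def etaEq (Δ' : Seg) (h h' : Multiset Seg) : Prop :=
  ∀ c, segA Δ' ≤ c → ∀ hc : c ≤ segB Δ',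
    epsilonSeg (Seg.mk c (segB Δ') hc) h = epsilonSeg (Seg.mk c (segB Δ') hc) h'

/-- The intermediate segment property for `(Δ, Δ', h)`. -/
def IntermediateSeg (Δ Δ' : Seg) (h : Multiset Seg) : Prop :=
  ∃ D ∈ h, segA Δ ≤ segA D ∧ segA D < segA Δ' ∧ segB Δ ≤ segB D ∧ segB D < segB Δ'

/-- Helper to build segments from literals. -/
def sg (a b : ℤ) (hab : a ≤ b := by decide) : Seg := Seg.mk a b hab

lemma seg_le_iff {Δ Δ' : Seg} :
    Δ ≤ Δ' ↔ segA Δ < segA Δ' ∨ (segA Δ = segA Δ' ∧ segB Δ ≤ segB Δ') := by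
  change toLex (Subtype.val Δ) ≤ toLex (Subtype.val Δ') ↔ _
  rw [Prod.Lex.le_iff]
  rfl

lemma segA_le_of_le {Δ Δ' : Seg} (h : Δ ≤ Δ') : segA Δ ≤ segA Δ' := by
  rcases seg_le_iff.1 h with h1 | ⟨h1, _⟩
  · exact le_of_lt h1
  · exact le_of_eq h1

lemma minStart_le {n : Multiset Seg} {Δ : Seg} (hΔ : Δ ∈ n) : minStart n ≤ segA Δ := by
  unfold minStart
  have hmem : segA Δ ∈ (n.map segA).sort (· ≤ ·) := by
    rw [Multiset.mem_sort]
    exact Multiset.mem_map_of_mem _ hΔ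
  have hs : ((n.map segA).sort (· ≤ ·)).Pairwise (· ≤ ·) := Multiset.pairwise_sort _ _
  cases hl : (n.map segA).sort (· ≤ ·) with
  | nil => rw [hl] at hmem; simp at hmem
  | cons y t =>
    rw [hl] at hmem hs
    simp only [List.headD_cons]
    rcases List.mem_cons.1 hmem with h1 | h1
    · exact le_of_eq h1.symm
    · exact List.rel_of_pairwise_cons hs h1

lemma exists_min_choice {Δ : Seg} {h : Multiset Seg} (hadm : SegAdmissible Δ h) :
    ∃ D, (D ∈ h ∧ segA D = segA Δ ∧ segB Δ ≤ segB D) ∧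
      ∀ D', (D' ∈ h ∧ segA D' = segA Δ ∧ segB Δ ≤ segB D') → segB D ≤ segB D' := by
  obtain ⟨D0, hD0, hA0, hB0⟩ := hadm
  have hne : (h.toFinset.filter (fun D => segA D = segA Δ ∧ segB Δ ≤ segB D)).Nonempty :=
    ⟨D0, Finset.mem_filter.2 ⟨Multiset.mem_toFinset.2 hD0, hA0, hB0⟩⟩
  obtain ⟨D, hD, hmin⟩ := Finset.exists_min_image _ segB hne
  rw [Finset.mem_filter, Multiset.mem_toFinset] at hD
  refine ⟨D, ⟨hD.1, hD.2⟩, ?_⟩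
  rintro D' ⟨h1, h2, h3⟩
  exact hmin D' (Finset.mem_filter.2 ⟨Multiset.mem_toFinset.2 h1, h2, h3⟩)

lemma upsilon_spec {Δ : Seg} {h : Multiset Seg} (hadm : SegAdmissible Δ h) :
    segA (Upsilon Δ h) = segA Δ ∧ segB Δ ≤ segB (Upsilon Δ h) := by
  have hx := exists_min_choice hadm
  have hspec := Classical.choose_spec hx
  unfold Upsilon removalSeq
  rw [dif_pos hx]
  exact ⟨hspec.1.2.1, hspec.1.2.2⟩

lemma rList_none : ∀ L : List Seg, rList L none = none
  | [] => rfl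
  | Δ :: rest => by
    show rList rest (Option.bind none _) = none
    exact rList_none rest

lemma rList_append : ∀ (L1 L2 : List Seg) (o : Option (Multiset Seg)),
    rList (L1 ++ L2) o = rList L2 (rList L1 o)
  | [], L2, o => rfl
  | Δ :: rest, L2, o => by
    show rList (rest ++ L2) _ = _
    rw [rList_append rest L2]
    rfl

lemma fsList_le (Δb : Seg) : ∀ (L : List Seg) (h : Multiset Seg),
    rList L (some h) ≠ none →
    ((L : Multiset Seg).filter (fun Δ => Subseg Δb Δ)).card ≤
      ((fsList L h).filter (fun Δ => Subseg Δb Δ)).card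
  | [], h, _ => by simp [fsList]
  | Δ :: rest, h, hne => by
    have hsr : segRemove Δ h ≠ none := by
      intro hc
      apply hne
      show rList rest (Option.bind (some h) (fun x => segRemove Δ x)) = none
      rw [Option.bind_some, hc]
      exact rList_none rest
    obtain ⟨h', hh'⟩ := Option.ne_none_iff_exists'.1 hsr
    have hadm : SegAdmissible Δ h := by
      by_contra hna
      rw [segRemove, if_neg hna] at hh'
      cases hh'
    have hrest : rList rest (some h') ≠ none := by
      intro hc
      apply hne
      show rList rest (Option.bind (some h) (fun x => segRemove Δ x)) = none
      rw [Option.bind_some, hh']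
      exact hc
    have ih := fsList_le Δb rest h' hrest
    have hU := upsilon_spec hadm
    have hfs : fsList (Δ :: rest) h = Upsilon Δ h ::ₘ fsList rest h' := by
      rw [fsList, hh']
    rw [hfs, ← Multiset.cons_coe, Multiset.filter_cons, Multiset.filter_cons]
    by_cases hP : Subseg Δb Δ
    · have hPU : Subseg Δb (Upsilon Δ h) := by
        refine ⟨?_, le_trans hP.2 hU.2⟩
        rw [hU.1]; exact hP.1
      rw [if_pos hP, if_pos hPU]
      simpa using ih
    · rw [if_neg hP]
      rw [Multiset.card_add, Multiset.card_add, Multiset.card_zero, zero_add]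
      exact le_trans ih (Nat.le_add_left _ _)


lemma dropWhile_aux (a : ℤ) : ∀ L : List Seg, L.Pairwise (· ≤ ·) → (∀ Δ ∈ L, a ≤ segA Δ) →
    ∀ x ∈ L.dropWhile (fun Δ => decide (segA Δ = a)), segA x ≠ a
  | [], _, _ => by intro x hx; simp at hx
  | y :: t, hs, hb => by
    by_cases hy : segA y = a
    · rw [List.dropWhile_cons_of_pos (by simpa using hy)]
      exact dropWhile_aux a t hs.of_cons (fun Δ hΔ => hb Δ (List.mem_cons_of_mem y hΔ))
    · rw [List.dropWhile_cons_of_neg (by simpa using hy)]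
      intro x hx
      rcases List.mem_cons.1 hx with h1 | h1
      · rw [h1]; exact hy
      · have hyx : y ≤ x := List.rel_of_pairwise_cons hs h1
        have h2 := segA_le_of_le hyx
        have h3 := hb y List.mem_cons_self
        omega

/-- the non-strict inequality in Definition of local
minimizability always holds. -/
theorem statement9 (n h : Multiset Seg) (hn : n ≠ 0) (hadm : rM n h ≠ none) :
    ∀ Δb ∈ atc n (minStart n + 1),
      ((atc n (minStart n)).filter (fun Δ => Subseg Δb Δ)).card ≤
        ((fs n h).filter (fun Δ => Subseg Δb Δ)).card := by
  intro Δb _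
  obtain ⟨L, hLsort⟩ : ∃ L, n.sort (· ≤ ·) = L := ⟨_, rfl⟩
  have hLsorted : L.Pairwise (· ≤ ·) := hLsort ▸ Multiset.pairwise_sort _ _
  have hLn : (L : Multiset Seg) = n := hLsort ▸ Multiset.sort_eq _ _
  have hLmem : ∀ Δ ∈ L, minStart n ≤ segA Δ := fun Δ hΔ =>
    minStart_le (show Δ ∈ n by rw [← hLn]; exact hΔ)
  obtain ⟨A, hA⟩ : ∃ A, L.takeWhile (fun Δ => decide (segA Δ = minStart n)) = A := ⟨_, rfl⟩
  obtain ⟨B, hB⟩ : ∃ B, L.dropWhile (fun Δ => decide (segA Δ = minStart n)) = B := ⟨_, rfl⟩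
  have hAB : A ++ B = L := by
    rw [← hA, ← hB]
    exact List.takeWhile_append_dropWhile (p := fun Δ => decide (segA Δ = minStart n)) (l := L)
  have hBnot : ∀ x ∈ B, ¬ (decide (segA x = minStart n)) = true := by
    intro x hx
    simp only [decide_eq_true_eq]
    exact dropWhile_aux (minStart n) L hLsorted hLmem x (by rw [hB]; exact hx)
  have hAsorted : A.Pairwise (· ≤ ·) := by
    rw [← hA]; exact hLsorted.sublist (List.takeWhile_sublist _)
  have hAeq : (A : Multiset Seg) = atc n (minStart n) := by
    have hAmem : ∀ x ∈ A, decide (segA x = minStart n) = true := by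
      intro x hx
      rw [← hA] at hx
      exact List.mem_takeWhile_imp (p := fun Δ => decide (segA Δ = minStart n)) hx
    have hfilter : L.filter (fun Δ => decide (segA Δ = minStart n)) = A := by
      conv_lhs => rw [← hAB]
      rw [List.filter_append, List.filter_eq_self.2 hAmem,
        List.filter_eq_nil_iff.2 hBnot, List.append_nil]
    have h1 : atc n (minStart n) = Multiset.filter (fun Δ => segA Δ = minStart n)
        (L : Multiset Seg) := by rw [hLn]; rfl
    rw [h1, ← hfilter]
    simp [Multiset.filter_coe]
  have hAsort : (atc n (minStart n)).sort (· ≤ ·) = A := by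
    apply List.Perm.eq_of_pairwise' (Multiset.pairwise_sort _ _) hAsorted
    exact Multiset.coe_eq_coe.1 (by rw [Multiset.sort_eq, hAeq])
  have hrA : rList A (some h) ≠ none := by
    intro hc
    apply hadm
    show rList (n.sort (· ≤ ·)) (some h) = none
    rw [hLsort, ← hAB, rList_append, hc]
    exact rList_none B
  have hrM : rM (atc n (minStart n)) h ≠ none := by
    show rList ((atc n (minStart n)).sort (· ≤ ·)) (some h) ≠ none
    rw [hAsort]
    exact hrA
  have hfs : fs n h = fsList A h := by
    rw [fs, if_neg hn, if_pos hrM, hAsort]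
  rw [hfs]
  have hle := fsList_le Δb A h hrA
  rwa [hAeq] at hle
end
end

section
/- Let h = {[0,3], [0,1], [1,2], [1,2], [2,2], [3,3]} (a multiset, with [1,2] of multiplicity two) and p = {[0,1], [1,2], [2,2], [3,3]}. Then S'(h,p) = {m : r(m,h) = p} consists of exactly the three multisegments {[0,3],[1,2]}, {[0,3],[1,1],[2,2]} and {[0,2],[1,3]}; moreover {[0,3],[1,1],[2,2]} and {[0,2],[1,3]} are two distinct ≤_Z-maximal elements of S'(h,p), where m is ≤_Z-maximal in S'(h,p) if no m' ∈ S'(h,p) satisfies m ≤_Z m' with m' ≠ m. In particular, a ≤_Z-maximal element of S'(h,p) need not be unique. -/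
noncomputable section
open Classical

/-! ### Auxiliary development -/

theorem Seg.le_iff' {D D' : Seg} :
    D ≤ D' ↔ (segA D < segA D' ∨ (segA D = segA D' ∧ segB D ≤ segB D')) := by
  show toLex (Subtype.val D) ≤ toLex (Subtype.val D') ↔ _
  rw [Prod.Lex.le_iff]
  exact Iff.rfl

theorem Seg.ext_ab {D D' : Seg} (h1 : segA D = segA D') (h2 : segB D = segB D') :
    D = D' := Subtype.ext (Prod.ext h1 h2)

theorem Seg.leAB (D : Seg) : segA D ≤ segB D := D.2

/-- Computable sort of a multisegment. -/
def msortC (m : Multiset Seg) : List Seg :=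
  Quot.liftOn m (fun l => l.insertionSort (· ≤ ·)) (fun l₁ l₂ hp =>
    (fun hp h1 h2 => List.Perm.eq_of_pairwise' h1 h2 hp)
      (((l₁.perm_insertionSort (· ≤ ·)).trans hp).trans
        (l₂.perm_insertionSort (· ≤ ·)).symm)
      (List.pairwise_insertionSort _ _) (List.pairwise_insertionSort _ _))

theorem msortC_coe (m : Multiset Seg) : (msortC m : Multiset Seg) = m :=
  Quotient.inductionOn m (fun l => Quot.sound (l.perm_insertionSort (· ≤ ·)))

theorem msortC_sorted (m : Multiset Seg) : List.Pairwise (· ≤ ·) (msortC m) :=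
  Quotient.inductionOn m (fun l => List.pairwise_insertionSort _ _)

theorem msortC_eq (m : Multiset Seg) : msortC m = m.sort (· ≤ ·) :=
  (fun hp h1 h2 => List.Perm.eq_of_pairwise' h1 h2 hp)
    (Multiset.coe_eq_coe.1 (by rw [msortC_coe, Multiset.sort_eq]))
    (msortC_sorted m) (m.pairwise_sort _)

theorem msortC_mem {m : Multiset Seg} {D : Seg} : D ∈ msortC m ↔ D ∈ m := by
  rw [← Multiset.mem_coe, msortC_coe]

/-- Computable choice of the `≤`-least element of `h` satisfying `p`. -/
def pickD (h : Multiset Seg) (p : Seg → Prop) [DecidablePred p] : Option Seg :=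
  ((msortC h).filter (fun D => decide (p D))).head?

theorem pickD_none {h : Multiset Seg} {p : Seg → Prop} [DecidablePred p]
    (hp : pickD h p = none) : ∀ D ∈ h, ¬ p D := by
  intro D hD hpD
  have : (msortC h).filter (fun D => decide (p D)) = [] := by
    simpa [pickD, List.head?_eq_none_iff] using hp
  have hm : D ∈ (msortC h).filter (fun D => decide (p D)) :=
    List.mem_filter.2 ⟨msortC_mem.2 hD, by simpa using hpD⟩
  simp [this] at hm

theorem pickD_some {h : Multiset Seg} {p : Seg → Prop} [DecidablePred p] {D₀ : Seg}
    (hp : pickD h p = some D₀) :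
    D₀ ∈ h ∧ p D₀ ∧ ∀ D ∈ h, p D → D₀ ≤ D := by
  have hs : List.Pairwise (· ≤ ·) ((msortC h).filter (fun D => decide (p D))) :=
    (msortC_sorted h).filter _
  obtain ⟨t, ht⟩ : ∃ t, (msortC h).filter (fun D => decide (p D)) = D₀ :: t := by
    cases hfe : (msortC h).filter (fun D => decide (p D)) with
    | nil => simp [pickD, hfe] at hp
    | cons a t =>
      simp [pickD, hfe] at hp
      subst hp
      exact ⟨t, rfl⟩

  have hD₀mem : D₀ ∈ (msortC h).filter (fun D => decide (p D)) := by
    rw [ht]; exact List.mem_cons_self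
  refine ⟨msortC_mem.1 (List.mem_of_mem_filter hD₀mem), ?_, ?_⟩
  · simpa using List.of_mem_filter hD₀mem
  · intro D hD hpD
    have hDf : D ∈ (msortC h).filter (fun D => decide (p D)) :=
      List.mem_filter.2 ⟨msortC_mem.2 hD, by simpa using hpD⟩
    rw [ht] at hDf hs
    rcases List.mem_cons.1 hDf with rfl | hDt
    · exact le_rfl
    · exact List.rel_of_pairwise_cons hs hDt

/-- Computable version of `removalTail`. -/
def removalTailC (h : Multiset Seg) (b : ℤ) : ℕ → ℤ → ℤ → List Seg
  | 0, _, _ => []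
  | fuel + 1, aprev, bprev =>
    match pickD h (fun D => aprev < segA D ∧ b ≤ segB D ∧ segB D < bprev) with
    | none => []
    | some D₀ => D₀ :: removalTailC h b fuel (segA D₀) (segB D₀)

/-- Computable version of `removalSeq`. -/
def removalSeqC (Δ : Seg) (h : Multiset Seg) : List Seg :=
  match pickD h (fun D => segA D = segA Δ ∧ segB Δ ≤ segB D) with
  | none => []
  | some D₀ => D₀ :: removalTailC h (segB Δ) (segB D₀ - segB Δ).toNat (segA D₀) (segB D₀)

theorem removalTailC_eq (h : Multiset Seg) (b : ℤ) :
    ∀ fuel aprev bprev, removalTail h b fuel aprev bprev = removalTailC h b fuel aprev bprev := by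
  intro fuel
  induction fuel with
  | zero => intro aprev bprev; rfl
  | succ n ih =>
    intro aprev bprev
    rw [removalTail, removalTailC]
    cases hpk : pickD h (fun D => aprev < segA D ∧ b ≤ segB D ∧ segB D < bprev) with
    | none =>
      rw [dif_neg]
      rintro ⟨D, ⟨hDh, hcond⟩, -⟩
      exact pickD_none hpk D hDh hcond
    | some D₀ =>
      obtain ⟨hmem, hcond, hmin⟩ := pickD_some hpk
      have hx : ∃ D, (D ∈ h ∧ aprev < segA D ∧ b ≤ segB D ∧ segB D < bprev) ∧
          ∀ D', (D' ∈ h ∧ aprev < segA D' ∧ b ≤ segB D' ∧ segB D' < bprev) → D ≤ D' :=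
        ⟨D₀, ⟨hmem, hcond⟩, fun D' ⟨h1, h2⟩ => hmin D' h1 h2⟩
      rw [dif_pos hx]
      have hce : Classical.choose hx = D₀ := by
        obtain ⟨⟨cm, cc⟩, cmin⟩ := Classical.choose_spec hx
        exact le_antisymm (cmin D₀ ⟨hmem, hcond⟩) (hmin _ cm cc)
      rw [hce, ih]

theorem removalSeqC_eq (Δ : Seg) (h : Multiset Seg) :
    removalSeq Δ h = removalSeqC Δ h := by
  rw [removalSeq, removalSeqC]
  cases hpk : pickD h (fun D => segA D = segA Δ ∧ segB Δ ≤ segB D) with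
  | none =>
    rw [dif_neg]
    rintro ⟨D, ⟨hDh, hcond⟩, -⟩
    exact pickD_none hpk D hDh hcond
  | some D₀ =>
    obtain ⟨hmem, hcond, hmin⟩ := pickD_some hpk
    have hx : ∃ D, (D ∈ h ∧ segA D = segA Δ ∧ segB Δ ≤ segB D) ∧
        ∀ D', (D' ∈ h ∧ segA D' = segA Δ ∧ segB Δ ≤ segB D') → segB D ≤ segB D' := by
      refine ⟨D₀, ⟨hmem, hcond⟩, fun D' ⟨h1, h2, h3⟩ => ?_⟩
      rcases Seg.le_iff'.1 (hmin D' h1 ⟨h2, h3⟩) with hlt | ⟨-, hle⟩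
      · omega
      · exact hle
    rw [dif_pos hx]
    have hce : Classical.choose hx = D₀ := by
      obtain ⟨⟨cm, ⟨ca, cb⟩⟩, cmin⟩ := Classical.choose_spec hx
      refine Seg.ext_ab (by rw [ca, hcond.1]) ?_
      have h1 : segB (Classical.choose hx) ≤ segB D₀ := cmin D₀ ⟨hmem, hcond⟩
      have h2 : segB D₀ ≤ segB (Classical.choose hx) := by
        rcases Seg.le_iff'.1 (hmin _ cm ⟨ca, cb⟩) with hlt | ⟨-, hle⟩
        · rw [ca, hcond.1] at hlt; omega
        · exact hle
      omega
    rw [hce, removalTailC_eq]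

/-- Computable version of `segRemove`. -/
def segRemoveC (Δ : Seg) (h : Multiset Seg) : Option (Multiset Seg) :=
  match removalSeqC Δ h with
  | [] => none
  | L => some (h - (L : Multiset Seg) + truncList (segB Δ) L)

theorem segRemoveC_eq (Δ : Seg) (h : Multiset Seg) :
    segRemove Δ h = segRemoveC Δ h := by
  rw [segRemove, segRemoveC]
  cases hL : removalSeqC Δ h with
  | nil =>
    rw [if_neg]
    rintro ⟨D, hD, ha, hb⟩
    rw [removalSeqC] at hL
    cases hpk : pickD h (fun D => segA D = segA Δ ∧ segB Δ ≤ segB D) with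
    | none => exact pickD_none hpk D hD ⟨ha, hb⟩
    | some D₀ => rw [hpk] at hL; simp at hL
  | cons D₀ T =>
    rw [removalSeqC_eq, hL, if_pos]
    rw [removalSeqC] at hL
    cases hpk : pickD h (fun D => segA D = segA Δ ∧ segB Δ ≤ segB D) with
    | none => rw [hpk] at hL; simp at hL
    | some E =>
      obtain ⟨hmem, ⟨ha, hb⟩, -⟩ := pickD_some hpk
      rw [hpk] at hL
      simp only [List.cons.injEq] at hL
      exact ⟨E, hmem, ha, hb⟩

/-- Computable version of `rList`. -/
def rListC : List Seg → Option (Multiset Seg) → Option (Multiset Seg)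
  | [], o => o
  | Δ :: rest, o => rListC rest (o.bind (fun x => segRemoveC Δ x))

theorem rListC_eq : ∀ (l : List Seg) (o : Option (Multiset Seg)),
    rList l o = rListC l o := by
  intro l
  induction l with
  | nil => intro o; rfl
  | cons Δ rest ih =>
    intro o
    rw [rList, rListC, ih]
    congr 1
    cases o with
    | none => rfl
    | some x => simp [segRemoveC_eq]

/-- Computable version of `rM`. -/
def rMC (m h : Multiset Seg) : Option (Multiset Seg) :=
  rListC (msortC m) (some h)

theorem rMC_eq (m h : Multiset Seg) : rM m h = rMC m h := by
  rw [rM, rMC, msortC_eq, rListC_eq]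

theorem rListC_none : ∀ (l : List Seg), rListC l none = none := by
  intro l
  induction l with
  | nil => rfl
  | cons Δ rest ih => rw [rListC, Option.bind]; exact ih

theorem good_iff (m h p : Multiset Seg) :
    rMC m h = some p ↔ ((rMC m h).getD 0 = p ∧ rMC m h ≠ none) := by
  cases ho : rMC m h with
  | none => simp
  | some x => simp [Option.getD]

/-! ### Cuspidal support bookkeeping -/

theorem csupp_add (s t : Multiset Seg) : csupp (s + t) = csupp s + csupp t :=
  Multiset.add_bind s t _

theorem csupp_cons (D : Seg) (s : Multiset Seg) :
    csupp (D ::ₘ s) = (Finset.Icc (segA D) (segB D)).val + csupp s :=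
  Multiset.cons_bind _ _ _

theorem csupp_coe_cons (D : Seg) (L : List Seg) :
    csupp ((D :: L : List Seg) : Multiset Seg)
      = (Finset.Icc (segA D) (segB D)).val + csupp (L : Multiset Seg) := by
  rw [← Multiset.cons_coe, csupp_cons]

theorem csupp_le {s t : Multiset Seg} (hst : s ≤ t) : csupp s ≤ csupp t := by
  obtain ⟨u, rfl⟩ := Multiset.le_iff_exists_add.1 hst
  rw [csupp_add]
  exact le_add_right le_rfl

theorem IccVal_split (a b c : ℤ) (h1 : a ≤ b) (h2 : b ≤ c + 1) :
    (Finset.Icc a c).val = (Finset.Icc a (b - 1)).val + (Finset.Icc b c).val := by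
  have hd : Disjoint (Finset.Icc a (b - 1)) (Finset.Icc b c) := by
    rw [Finset.disjoint_left]
    intro x hx hx'
    rw [Finset.mem_Icc] at hx hx'
    omega
  have he : Finset.Icc a c = (Finset.Icc a (b - 1)).disjUnion (Finset.Icc b c) hd := by
    ext x
    simp only [Finset.mem_Icc, Finset.mem_disjUnion]
    omega
  rw [he]
  rfl

theorem csupp_mkSeg? (a b : ℤ) : csupp (mkSeg? a b) = (Finset.Icc a b).val := by
  rw [mkSeg?]
  split
  · rename_i hab
    show csupp ((Seg.mk a b hab) ::ₘ 0) = _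
    rw [csupp_cons]
    show _ + csupp 0 = _
    rw [show csupp 0 = 0 from Multiset.zero_bind _, add_zero]
    rfl
  · rename_i hab
    rw [show csupp 0 = 0 from Multiset.zero_bind _, Finset.Icc_eq_empty hab]
    rfl

/-- The chain relation along a removal sequence. -/
def chR (D D' : Seg) : Prop := segA D < segA D' ∧ segB D' < segB D

instance : IsTrans Seg chR := ⟨fun _ _ _ h1 h2 => ⟨h1.1.trans h2.1, h2.2.trans h1.2⟩⟩

theorem removalTailC_spec (h : Multiset Seg) (b : ℤ) :
    ∀ fuel aprev bprev,
      (∀ D ∈ removalTailC h b fuel aprev bprev,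
        D ∈ h ∧ b ≤ segB D ∧ aprev < segA D ∧ segB D < bprev) ∧
      List.Chain' chR (removalTailC h b fuel aprev bprev) := by
  intro fuel
  induction fuel with
  | zero => intro _ _; exact ⟨fun D hD => by simp [removalTailC] at hD, by simp [removalTailC, List.Chain']⟩
  | succ n ih =>
    intro aprev bprev
    rw [removalTailC]
    cases hpk : pickD h (fun D => aprev < segA D ∧ b ≤ segB D ∧ segB D < bprev) with
    | none => exact ⟨fun D hD => by simp at hD, by simp [List.Chain']⟩
    | some D₀ =>
      obtain ⟨hmem, ⟨h1, h2, h3⟩, -⟩ := pickD_some hpk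
      obtain ⟨ihm, ihc⟩ := ih (segA D₀) (segB D₀)
      constructor
      · intro D hD
        rcases List.mem_cons.1 hD with rfl | hD'
        · exact ⟨hmem, h2, h1, h3⟩
        · obtain ⟨hh, hbb, ha', hb'⟩ := ihm D hD'
          exact ⟨hh, hbb, by omega, by omega⟩
      · refine List.isChain_cons.2 ⟨?_, ihc⟩
        intro y hy
        have := ihm y (List.mem_of_mem_head? hy)
        exact ⟨this.2.2.1, this.2.2.2⟩

theorem removalSeqC_spec (Δ : Seg) (h : Multiset Seg) {D₀ : Seg} {T : List Seg}
    (hL : removalSeqC Δ h = D₀ :: T) :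
    segA D₀ = segA Δ ∧
    (∀ D ∈ D₀ :: T, D ∈ h ∧ segB Δ ≤ segB D) ∧
    List.Chain' chR (D₀ :: T) := by
  rw [removalSeqC] at hL
  cases hpk : pickD h (fun D => segA D = segA Δ ∧ segB Δ ≤ segB D) with
  | none => rw [hpk] at hL; simp at hL
  | some E =>
    rw [hpk] at hL
    simp only [List.cons.injEq] at hL
    obtain ⟨rfl, rfl⟩ := hL
    obtain ⟨hmem, ⟨ha, hb⟩, -⟩ := pickD_some hpk
    obtain ⟨tm, tc⟩ := removalTailC_spec h (segB Δ) _ (segA E) (segB E)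
    refine ⟨ha, ?_, ?_⟩
    · intro D hD
      rcases List.mem_cons.1 hD with rfl | hD'
      · exact ⟨hmem, hb⟩
      · exact ⟨(tm D hD').1, (tm D hD').2.1⟩
    · refine List.isChain_cons.2 ⟨?_, tc⟩
      intro y hy
      have := tm y (List.mem_of_mem_head? hy)
      exact ⟨this.2.2.1, this.2.2.2⟩

theorem chain_nodup {L : List Seg} (hc : List.Chain' chR L) : L.Nodup := by
  have hp : List.Pairwise chR L := List.isChain_iff_pairwise.mp hc
  exact hp.imp (fun {a b} hab => fun he => by rw [he] at hab; exact lt_irrefl _ hab.1)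

theorem coe_le_of_nodup {L : List Seg} {h : Multiset Seg} (hn : L.Nodup)
    (hm : ∀ D ∈ L, D ∈ h) : (L : Multiset Seg) ≤ h := by
  rw [Multiset.le_iff_count]
  intro x
  by_cases hx : x ∈ L
  · rw [Multiset.coe_count, List.count_eq_one_of_mem hn hx]
    exact Multiset.count_pos.2 (hm x hx)
  · rw [Multiset.coe_count, List.count_eq_zero_of_not_mem hx]
    exact Nat.zero_le _

theorem chain_last_bounds : ∀ (T : List Seg) (D : Seg), List.Chain' chR (D :: T) →
    segA D ≤ segA ((D :: T).getLast (List.cons_ne_nil _ _)) ∧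
    segB ((D :: T).getLast (List.cons_ne_nil _ _)) ≤ segB D := by
  intro T
  induction T with
  | nil => intro D _; exact ⟨le_rfl, le_rfl⟩
  | cons D' T' ih =>
    intro D hc
    rw [List.Chain', List.isChain_cons_cons] at hc
    obtain ⟨hA, hB⟩ := ih D' hc.2
    rw [List.getLast_cons (List.cons_ne_nil _ _)]
    exact ⟨le_trans (le_of_lt hc.1.1) hA, le_trans hB (le_of_lt hc.1.2)⟩

theorem key_trunc (b : ℤ) : ∀ (T : List Seg) (D : Seg),
    List.Chain' chR (D :: T) → (∀ E ∈ D :: T, b ≤ segB E) →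
    csupp ((D :: T : List Seg) : Multiset Seg)
      + (Finset.Icc (b + 1) (segB ((D :: T).getLast (List.cons_ne_nil _ _)))).val
    = csupp (truncList b (D :: T))
      + (Finset.Icc (segA D) (segB ((D :: T).getLast (List.cons_ne_nil _ _)))).val := by
  intro T
  induction T with
  | nil =>
    intro D _ hb
    have hbD : b ≤ segB D := hb D List.mem_cons_self
    rw [List.getLast_singleton', truncList, csupp_mkSeg?, csupp_coe_cons]
    rw [show csupp (([] : List Seg) : Multiset Seg) = 0 from Multiset.zero_bind _, add_zero]
    exact add_comm _ _
  | cons D' T' ih =>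
    intro D hc hb
    rw [List.Chain', List.isChain_cons_cons] at hc
    obtain ⟨⟨haa, hbb⟩, hc'⟩ := hc
    have hIH := ih D' hc' (fun E hE => hb E (List.mem_cons_of_mem _ hE))
    rw [List.getLast_cons (List.cons_ne_nil _ _)]
    set bL := segB ((D' :: T').getLast (List.cons_ne_nil _ _)) with hbL
    obtain ⟨hlA, hlB⟩ := chain_last_bounds T' D' hc'
    have haL : segA D' ≤ bL := le_trans hlA (Seg.leAB _)
    have hbL' : bL ≤ segB D' := hlB
    have s1 : (Finset.Icc (segA D) (segB D)).val
        = (Finset.Icc (segA D) (segA D' - 1)).val + (Finset.Icc (segA D') (segB D)).val :=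
      IccVal_split _ _ _ (le_of_lt haa) (by have := Seg.leAB D'; omega)
    have s2 : (Finset.Icc (segA D) bL).val
        = (Finset.Icc (segA D) (segA D' - 1)).val + (Finset.Icc (segA D') bL).val :=
      IccVal_split _ _ _ (le_of_lt haa) (by omega)
    rw [csupp_coe_cons, show truncList b (D :: D' :: T')
        = mkSeg? (segA D') (segB D) + truncList b (D' :: T') from rfl,
      csupp_add, csupp_mkSeg?, s1, s2]
    rw [add_assoc, hIH]
    abel

theorem csupp_segRemoveC {Δ : Seg} {h h' : Multiset Seg}
    (hr : segRemoveC Δ h = some h') :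
    csupp h = csupp h' + (Finset.Icc (segA Δ) (segB Δ)).val := by
  rw [segRemoveC] at hr
  cases hL : removalSeqC Δ h with
  | nil => rw [hL] at hr; exact absurd hr (by simp)
  | cons D₀ T =>
    rw [hL] at hr
    have hr' : h - ((D₀ :: T : List Seg) : Multiset Seg) + truncList (segB Δ) (D₀ :: T) = h' :=
      Option.some.inj hr
    obtain ⟨ha, hmem, hchain⟩ := removalSeqC_spec Δ h hL
    have hle : ((D₀ :: T : List Seg) : Multiset Seg) ≤ h :=
      coe_le_of_nodup (chain_nodup hchain) (fun D hD => (hmem D hD).1)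
    have hkey := key_trunc (segB Δ) T D₀ hchain (fun E hE => (hmem E hE).2)
    set bL := segB ((D₀ :: T).getLast (List.cons_ne_nil _ _)) with hbL
    have hbLge : segB Δ ≤ bL :=
      (hmem _ (List.getLast_mem (List.cons_ne_nil _ _))).2
    have hsplit : (Finset.Icc (segA D₀) bL).val
        = (Finset.Icc (segA D₀) (segB Δ)).val + (Finset.Icc (segB Δ + 1) bL).val := by
      have := IccVal_split (segA D₀) (segB Δ + 1) bL
        (by have := Seg.leAB Δ; omega) (by omega)
      simpa using this
    rw [hsplit] at hkey
    have hcL : csupp ((D₀ :: T : List Seg) : Multiset Seg)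
        = csupp (truncList (segB Δ) (D₀ :: T)) + (Finset.Icc (segA D₀) (segB Δ)).val := by
      have h2 : csupp ((D₀ :: T : List Seg) : Multiset Seg) + (Finset.Icc (segB Δ + 1) bL).val
          = (csupp (truncList (segB Δ) (D₀ :: T)) + (Finset.Icc (segA D₀) (segB Δ)).val)
            + (Finset.Icc (segB Δ + 1) bL).val := by
        rw [hkey]; abel
      exact add_right_cancel h2
    have hh : h = (h - ((D₀ :: T : List Seg) : Multiset Seg))
        + ((D₀ :: T : List Seg) : Multiset Seg) := (tsub_add_cancel_of_le hle).symm
    calc csupp h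
        = csupp (h - ((D₀ :: T : List Seg) : Multiset Seg))
          + csupp ((D₀ :: T : List Seg) : Multiset Seg) := by rw [← csupp_add, ← hh]
      _ = csupp h' + (Finset.Icc (segA Δ) (segB Δ)).val := by
          rw [hcL, ← hr', csupp_add, ha]; abel

theorem csupp_rListC : ∀ (l : List Seg) (h p : Multiset Seg),
    rListC l (some h) = some p →
    csupp h = csupp p + csupp ((l : List Seg) : Multiset Seg) := by
  intro l
  induction l with
  | nil =>
    intro h p hp
    obtain rfl : h = p := Option.some.inj hp
    rw [show csupp (([] : List Seg) : Multiset Seg) = 0 from Multiset.zero_bind _, add_zero]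
  | cons Δ rest ih =>
    intro h p hp
    rw [rListC, show ((some h).bind fun x => segRemoveC Δ x) = segRemoveC Δ h from rfl] at hp
    cases hs : segRemoveC Δ h with
    | none => rw [hs, rListC_none] at hp; exact absurd hp (by simp)
    | some h'' =>
      rw [hs] at hp
      rw [csupp_segRemoveC hs, ih h'' p hp, csupp_coe_cons]
      abel

theorem csupp_rM {m h p : Multiset Seg} (hr : rM m h = some p) :
    csupp h = csupp p + csupp m := by
  rw [rMC_eq, rMC] at hr
  have := csupp_rListC _ _ _ hr
  rwa [msortC_coe] at this

/-! ### The concrete example -/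

/-- The multisegment `h` of the example. -/
def exH : Multiset Seg := {sg 0 3, sg 0 1, sg 1 2, sg 1 2, sg 2 2, sg 3 3}
/-- The multisegment `p` of the example. -/
def exP : Multiset Seg := {sg 0 1, sg 1 2, sg 2 2, sg 3 3}
/-- The cuspidal support `csupp h - csupp p`. -/
def exS : Multiset ℤ := {0, 1, 1, 2, 2, 3}

def exA : Multiset Seg := {sg 0 3, sg 1 2}
def exB : Multiset Seg := {sg 0 3, sg 1 1, sg 2 2}
def exC : Multiset Seg := {sg 0 2, sg 1 3}

theorem Seg.eq_iff {D D' : Seg} : D = D' ↔ (segA D = segA D' ∧ segB D = segB D') :=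
  ⟨fun h => by rw [h]; exact ⟨rfl, rfl⟩, fun h => Seg.ext_ab h.1 h.2⟩

theorem mem_exS {x : ℤ} (hx : x ∈ exS) : 0 ≤ x ∧ x ≤ 3 := by
  simp only [exS, Multiset.insert_eq_cons, Multiset.mem_cons, Multiset.mem_singleton] at hx
  rcases hx with rfl | rfl | rfl | rfl | rfl | rfl <;> omega

theorem mem_csupp_of_mem {m : Multiset Seg} {Δ : Seg} (hΔ : Δ ∈ m) :
    segA Δ ∈ csupp m ∧ segB Δ ∈ csupp m := by
  constructor
  · exact Multiset.mem_bind.2 ⟨Δ, hΔ, by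
      rw [← Finset.mem_def, Finset.mem_Icc]; exact ⟨le_rfl, Seg.leAB Δ⟩⟩
  · exact Multiset.mem_bind.2 ⟨Δ, hΔ, by
      rw [← Finset.mem_def, Finset.mem_Icc]; exact ⟨Seg.leAB Δ, le_rfl⟩⟩

theorem count_le_csupp (Δ : Seg) (m : Multiset Seg) (x : ℤ)
    (h1 : segA Δ ≤ x) (h2 : x ≤ segB Δ) :
    m.count Δ ≤ (csupp m).count x := by
  have hrep : Multiset.replicate (m.count Δ) Δ ≤ m :=
    Multiset.le_count_iff_replicate_le.1 le_rfl
  have hcount := Multiset.le_iff_count.1 (csupp_le hrep) x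
  refine le_trans (le_of_eq ?_) hcount
  rw [csupp, Multiset.count_bind, Multiset.map_replicate]
  have h3 : (Finset.Icc (segA Δ) (segB Δ)).val.count x = 1 :=
    Multiset.count_eq_one_of_mem (Finset.Icc (segA Δ) (segB Δ)).nodup
      (by rw [← Finset.mem_def, Finset.mem_Icc]; exact ⟨h1, h2⟩)
  rw [h3, Multiset.sum_replicate, smul_eq_mul, mul_one]

/-- The candidate multisegment built from multiplicities. -/
def mkM (k1 k2 k3 k4 k5 k6 k7 k8 k9 k10 : ℕ) : Multiset Seg :=
  Multiset.replicate k1 (sg 0 0) + Multiset.replicate k2 (sg 0 1)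
    + Multiset.replicate k3 (sg 0 2) + Multiset.replicate k4 (sg 0 3)
    + Multiset.replicate k5 (sg 1 1) + Multiset.replicate k6 (sg 1 2)
    + Multiset.replicate k7 (sg 1 3) + Multiset.replicate k8 (sg 2 2)
    + Multiset.replicate k9 (sg 2 3) + Multiset.replicate k10 (sg 3 3)

/-- Decomposition of a multisegment supported in `[0,3]` into replicates. -/
theorem decomp (m : Multiset Seg)
    (hends : ∀ Δ ∈ m, 0 ≤ segA Δ ∧ segA Δ ≤ 3 ∧ 0 ≤ segB Δ ∧ segB Δ ≤ 3) :
    m = mkM (m.count (sg 0 0)) (m.count (sg 0 1)) (m.count (sg 0 2)) (m.count (sg 0 3))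
      (m.count (sg 1 1)) (m.count (sg 1 2)) (m.count (sg 1 3)) (m.count (sg 2 2))
      (m.count (sg 2 3)) (m.count (sg 3 3)) := by
  ext x
  simp only [mkM, Multiset.count_add, Multiset.count_replicate]
  have hsw : ∀ y : Seg, (if y = x then m.count y else 0) = (if y = x then m.count x else 0) := by
    intro y; split
    · rename_i hyx; rw [hyx]
    · rfl
  simp only [hsw]
  simp only [Seg.eq_iff]
  by_cases hx : x ∈ m
  · obtain ⟨⟨a, b⟩, hab⟩ := x
    obtain ⟨ha0, ha3, hb0, hb3⟩ := hends _ hx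
    have ha0' : (0:ℤ) ≤ a := ha0
    have ha3' : a ≤ 3 := ha3
    have hb0' : (0:ℤ) ≤ b := hb0
    have hb3' : b ≤ 3 := hb3
    clear ha0 ha3 hb0 hb3 hx
    interval_cases a <;> interval_cases b <;>
      simp [Seg.eq_iff, segA, segB, sg, Seg.mk]
  · rw [Multiset.count_eq_zero_of_notMem hx]
    simp

/-- Boolean check for a single candidate. -/
def chkM (M : Multiset Seg) : Bool :=
  (!(decide (csupp M = exS))) ||
    ((decide ((rMC M exH).getD 0 = exP) && !(decide (rMC M exH = none)))
      == (decide (M = exA) || decide (M = exB) || decide (M = exC)))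

theorem chkM_iff (M : Multiset Seg) :
    chkM M = true ↔
    (csupp M = exS →
      (((rMC M exH).getD 0 = exP ∧ rMC M exH ≠ none) ↔
        (M = exA ∨ M = exB ∨ M = exC))) := by
  simp only [chkM, Bool.or_eq_true, Bool.not_eq_true', decide_eq_false_iff_not, beq_iff_eq]
  rw [Bool.eq_iff_iff]
  simp only [Bool.and_eq_true, Bool.or_eq_true, Bool.not_eq_true',
    decide_eq_false_iff_not, decide_eq_true_eq]
  tauto

/-- The full finite enumeration as a single boolean computation. -/
def allchk : Bool :=
  (List.range 2).all fun k1 => (List.range 2).all fun k2 =>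
  (List.range 2).all fun k3 => (List.range 2).all fun k4 =>
  (List.range 3).all fun k5 => (List.range 3).all fun k6 =>
  (List.range 2).all fun k7 => (List.range 3).all fun k8 =>
  (List.range 2).all fun k9 => (List.range 2).all fun k10 =>
  chkM (mkM k1 k2 k3 k4 k5 k6 k7 k8 k9 k10)

set_option maxRecDepth 20000 in
theorem bigDec : allchk = true := by decide

theorem chk_all : ∀ k1 < 2, ∀ k2 < 2, ∀ k3 < 2, ∀ k4 < 2, ∀ k5 < 3, ∀ k6 < 3,
    ∀ k7 < 2, ∀ k8 < 3, ∀ k9 < 2, ∀ k10 < 2,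
    chkM (mkM k1 k2 k3 k4 k5 k6 k7 k8 k9 k10) = true := by
  have h := bigDec
  rw [allchk] at h
  simp only [List.all_eq_true, List.mem_range] at h
  intro k1 h1 k2 h2 k3 h3 k4 h4 k5 h5 k6 h6 k7 h7 k8 h8 k9 h9 k10 h10
  exact h k1 h1 k2 h2 k3 h3 k4 h4 k5 h5 k6 h6 k7 h7 k8 h8 k9 h9 k10 h10

/-! ### Analysis of elementary intersection-union operations -/

instance (Δ Δ' : Seg) : Decidable (Subseg Δ Δ') :=
  decidable_of_iff (segA Δ' ≤ segA Δ ∧ segB Δ ≤ segB Δ') Iff.rfl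

instance (Δ Δ' : Seg) : Decidable (Linked Δ Δ') :=
  decidable_of_iff (segA Δ ≤ segB Δ' + 1 ∧ segA Δ' ≤ segB Δ + 1 ∧
    ¬ Subseg Δ Δ' ∧ ¬ Subseg Δ' Δ) Iff.rfl

theorem elemIU_A {n : Multiset Seg} : ¬ elemIU exA n := by
  rintro ⟨Δ, Δ', hΔ, hΔ', hl, -⟩
  have hΔ2 : Δ = sg 0 3 ∨ Δ = sg 1 2 := by
    simpa [exA, Multiset.mem_cons, Multiset.mem_singleton] using hΔ
  rcases hΔ2 with rfl | rfl
  · rw [show (exA.erase (sg 0 3)) = {sg 1 2} from by decide] at hΔ'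
    rw [Multiset.mem_singleton] at hΔ'
    subst hΔ'
    exact absurd hl (by decide)
  · rw [show (exA.erase (sg 1 2)) = {sg 0 3} from by decide] at hΔ'
    rw [Multiset.mem_singleton] at hΔ'
    subst hΔ'
    exact absurd hl (by decide)

theorem elemIU_B {n : Multiset Seg} (h : elemIU exB n) : n = exA := by
  obtain ⟨Δ, Δ', hΔ, hΔ', hl, hn⟩ := h
  have hΔ2 : Δ = sg 0 3 ∨ Δ = sg 1 1 ∨ Δ = sg 2 2 := by
    simpa [exB, Multiset.mem_cons, Multiset.mem_singleton] using hΔ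
  rcases hΔ2 with rfl | rfl | rfl
  · rw [show (exB.erase (sg 0 3)) = {sg 1 1, sg 2 2} from by decide] at hΔ'
    have : Δ' = sg 1 1 ∨ Δ' = sg 2 2 := by
      simpa [Multiset.mem_cons, Multiset.mem_singleton] using hΔ'
    rcases this with rfl | rfl
    · exact absurd hl (by decide)
    · exact absurd hl (by decide)
  · rw [show (exB.erase (sg 1 1)) = {sg 0 3, sg 2 2} from by decide] at hΔ'
    have : Δ' = sg 0 3 ∨ Δ' = sg 2 2 := by
      simpa [Multiset.mem_cons, Multiset.mem_singleton] using hΔ'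
    rcases this with rfl | rfl
    · exact absurd hl (by decide)
    · rw [hn]; decide
  · rw [show (exB.erase (sg 2 2)) = {sg 0 3, sg 1 1} from by decide] at hΔ'
    have : Δ' = sg 0 3 ∨ Δ' = sg 1 1 := by
      simpa [Multiset.mem_cons, Multiset.mem_singleton] using hΔ'
    rcases this with rfl | rfl
    · exact absurd hl (by decide)
    · rw [hn]; decide

theorem elemIU_C {n : Multiset Seg} (h : elemIU exC n) : n = exA := by
  obtain ⟨Δ, Δ', hΔ, hΔ', hl, hn⟩ := h
  have hΔ2 : Δ = sg 0 2 ∨ Δ = sg 1 3 := by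
    simpa [exC, Multiset.mem_cons, Multiset.mem_singleton] using hΔ
  rcases hΔ2 with rfl | rfl
  · rw [show (exC.erase (sg 0 2)) = {sg 1 3} from by decide] at hΔ'
    rw [Multiset.mem_singleton] at hΔ'
    subst hΔ'
    rw [hn]; decide
  · rw [show (exC.erase (sg 1 3)) = {sg 0 2} from by decide] at hΔ'
    rw [Multiset.mem_singleton] at hΔ'
    subst hΔ'
    rw [hn]; decide

theorem reachA {x : Multiset Seg} (h : Relation.ReflTransGen elemIU exA x) : x = exA := by
  rcases Relation.ReflTransGen.cases_head h with rfl | ⟨c, hc, -⟩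
  · rfl
  · exact absurd hc elemIU_A

theorem reachB {x : Multiset Seg} (h : Relation.ReflTransGen elemIU exB x) :
    x = exB ∨ x = exA := by
  rcases Relation.ReflTransGen.cases_head h with rfl | ⟨c, hc, hrest⟩
  · exact Or.inl rfl
  · rw [elemIU_B hc] at hrest
    exact Or.inr (reachA hrest)

theorem reachC {x : Multiset Seg} (h : Relation.ReflTransGen elemIU exC x) :
    x = exC ∨ x = exA := by
  rcases Relation.ReflTransGen.cases_head h with rfl | ⟨c, hc, hrest⟩
  · exact Or.inl rfl
  · rw [elemIU_C hc] at hrest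
    exact Or.inr (reachA hrest)

theorem good_exA : (rMC exA exH).getD 0 = exP ∧ rMC exA exH ≠ none :=
  ((chkM_iff exA).1 (by decide) (by decide)).2 (Or.inl rfl)

theorem good_exB : (rMC exB exH).getD 0 = exP ∧ rMC exB exH ≠ none :=
  ((chkM_iff exB).1 (by decide) (by decide)).2 (Or.inr (Or.inl rfl))

theorem good_exC : (rMC exC exH).getD 0 = exP ∧ rMC exC exH ≠ none :=
  ((chkM_iff exC).1 (by decide) (by decide)).2 (Or.inr (Or.inr rfl))

theorem mainIff (m : Multiset Seg) :
    rM m exH = some exP ↔ (m = exA ∨ m = exB ∨ m = exC) := by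
  constructor
  · intro hr
    have hcs : csupp m = exS := by
      have h1 := csupp_rM hr
      have h2 : csupp exH = csupp exP + exS := by decide
      exact (add_left_cancel (h2.symm.trans h1)).symm
    have hends : ∀ Δ ∈ m, 0 ≤ segA Δ ∧ segA Δ ≤ 3 ∧ 0 ≤ segB Δ ∧ segB Δ ≤ 3 := by
      intro Δ hΔ
      obtain ⟨hA, hB⟩ := mem_csupp_of_mem hΔ
      rw [hcs] at hA hB
      obtain ⟨a1, a2⟩ := mem_exS hA
      obtain ⟨b1, b2⟩ := mem_exS hB
      exact ⟨a1, a2, b1, b2⟩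
    have hm := decomp m hends
    have hbound : ∀ (Δ : Seg) (x : ℤ), segA Δ ≤ x → x ≤ segB Δ →
        m.count Δ ≤ exS.count x := by
      intro Δ x h1 h2
      have := count_le_csupp Δ m x h1 h2
      rwa [hcs] at this
    have c1 : m.count (sg 0 0) < 2 := by
      have := hbound (sg 0 0) 0 (by decide) (by decide)
      have h0 : exS.count (0:ℤ) = 1 := by decide
      omega
    have c2 : m.count (sg 0 1) < 2 := by
      have := hbound (sg 0 1) 0 (by decide) (by decide)
      have h0 : exS.count (0:ℤ) = 1 := by decide
      omega
    have c3 : m.count (sg 0 2) < 2 := by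
      have := hbound (sg 0 2) 0 (by decide) (by decide)
      have h0 : exS.count (0:ℤ) = 1 := by decide
      omega
    have c4 : m.count (sg 0 3) < 2 := by
      have := hbound (sg 0 3) 0 (by decide) (by decide)
      have h0 : exS.count (0:ℤ) = 1 := by decide
      omega
    have c5 : m.count (sg 1 1) < 3 := by
      have := hbound (sg 1 1) 1 (by decide) (by decide)
      have h0 : exS.count (1:ℤ) = 2 := by decide
      omega
    have c6 : m.count (sg 1 2) < 3 := by
      have := hbound (sg 1 2) 1 (by decide) (by decide)
      have h0 : exS.count (1:ℤ) = 2 := by decide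
      omega
    have c7 : m.count (sg 1 3) < 2 := by
      have := hbound (sg 1 3) 3 (by decide) (by decide)
      have h0 : exS.count (3:ℤ) = 1 := by decide
      omega
    have c8 : m.count (sg 2 2) < 3 := by
      have := hbound (sg 2 2) 2 (by decide) (by decide)
      have h0 : exS.count (2:ℤ) = 2 := by decide
      omega
    have c9 : m.count (sg 2 3) < 2 := by
      have := hbound (sg 2 3) 3 (by decide) (by decide)
      have h0 : exS.count (3:ℤ) = 1 := by decide
      omega
    have c10 : m.count (sg 3 3) < 2 := by
      have := hbound (sg 3 3) 3 (by decide) (by decide)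
      have h0 : exS.count (3:ℤ) = 1 := by decide
      omega
    have hchk := chk_all _ c1 _ c2 _ c3 _ c4 _ c5 _ c6 _ c7 _ c8 _ c9 _ c10
    have hiff := (chkM_iff _).1 hchk
    rw [← hm] at hiff
    rw [rMC_eq] at hr
    exact (hiff hcs).1 ((good_iff m exH exP).1 hr)
  · intro hm
    rw [rMC_eq, good_iff]
    rcases hm with rfl | rfl | rfl
    · exact good_exA
    · exact good_exB
    · exact good_exC
/-- an explicit example with two distinct `≤_Z`-maximal
elements in `S'(h,p)`. -/
theorem statement14 :
    (∀ m : Multiset Seg,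
        rM m ({sg 0 3, sg 0 1, sg 1 2, sg 1 2, sg 2 2, sg 3 3} : Multiset Seg)
            = some ({sg 0 1, sg 1 2, sg 2 2, sg 3 3} : Multiset Seg) ↔
          (m = {sg 0 3, sg 1 2} ∨ m = {sg 0 3, sg 1 1, sg 2 2} ∨
            m = {sg 0 2, sg 1 3})) ∧
    ({sg 0 3, sg 1 1, sg 2 2} : Multiset Seg) ≠ {sg 0 2, sg 1 3} ∧
    (∀ m' : Multiset Seg,
        rM m' ({sg 0 3, sg 0 1, sg 1 2, sg 1 2, sg 2 2, sg 3 3} : Multiset Seg)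
            = some ({sg 0 1, sg 1 2, sg 2 2, sg 3 3} : Multiset Seg) →
        leZ ({sg 0 3, sg 1 1, sg 2 2} : Multiset Seg) m' →
        m' = {sg 0 3, sg 1 1, sg 2 2}) ∧
    (∀ m' : Multiset Seg,
        rM m' ({sg 0 3, sg 0 1, sg 1 2, sg 1 2, sg 2 2, sg 3 3} : Multiset Seg)
            = some ({sg 0 1, sg 1 2, sg 2 2, sg 3 3} : Multiset Seg) →
        leZ ({sg 0 2, sg 1 3} : Multiset Seg) m' →
        m' = {sg 0 2, sg 1 3}) := by
  refine ⟨fun m => mainIff m, by decide, ?_, ?_⟩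
  · intro m' hr hz
    have hz' : Relation.ReflTransGen elemIU m' exB := hz
    rcases (mainIff m').1 hr with rfl | rfl | rfl
    · exact absurd (reachA hz') (by decide)
    · rfl
    · rcases reachC hz' with h | h <;> exact absurd h (by decide)
  · intro m' hr hz
    have hz' : Relation.ReflTransGen elemIU m' exC := hz
    rcases (mainIff m').1 hr with rfl | rfl | rfl
    · exact absurd (reachA hz') (by decide)
    · rcases reachB hz' with h | h <;> exact absurd h (by decide)
    · rfl
end
end
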